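/- Suppose additionally that V = (V_k)_{k∈ℤ^N} is a family of isometric isomorphisms of Y onto itself with V_0 = I and V_k V_m = V_{k+m} for all k, m ∈ ℤ^N, compatible with P in the sense that: for all m, n ∈ ℕ there exists k₀ such that P_m V_k P_n = 0 whenever |k| > k₀; and for all m ∈ ℕ and k ∈ ℤ^N there exists n₀ such that P_m V_k Q_n = 0 = Q_n V_k P_m for all n > n₀. If A ∈ L(Y) is rich, then there exists B ∈ σ_op(A) which is self-similar, i.e. B ∈ σ_op(B), and recurrent, i.e. σ_op(C) = σ_op(B) for every C ∈ σ_op(B). -/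

import Mathlib

open Filter Topology

/-- Conditions (i) and (ii) on the approximate identity `P`. -/
def ApproxId {Y : Type*} [NormedAddCommGroup Y] [NormedSpace ℂ Y]
    (P : ℕ → Y →L[ℂ] Y) : Prop :=
  (∀ x : Y, IsLUB (Set.range fun n => ‖P n x‖) ‖x‖) ∧
  ∀ m : ℕ, ∃ Nm : ℕ, m ≤ Nm ∧ ∀ n, Nm ≤ n →
    (P n).comp (P m) = P m ∧ (P m).comp (P n) = P m

/-- `Q n = I - P n`. -/
def Qop {Y : Type*} [NormedAddCommGroup Y] [NormedSpace ℂ Y]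
    (P : ℕ → Y →L[ℂ] Y) (n : ℕ) : Y →L[ℂ] Y :=
  ContinuousLinearMap.id ℂ Y - P n

/-- Strict convergence of a sequence. -/
def SConv {Y : Type*} [NormedAddCommGroup Y] [NormedSpace ℂ Y]
    (P : ℕ → Y →L[ℂ] Y) (x : ℕ → Y) (x₀ : Y) : Prop :=
  (∃ C : ℝ, ∀ j, ‖x j‖ ≤ C) ∧
  ∀ m : ℕ, Tendsto (fun j => ‖P m (x j - x₀)‖) atTop (𝓝 0)

/-- `S(Y)`: sequentially continuous operators on `(Y,s)`. -/
def MemS {Y : Type*} [NormedAddCommGroup Y] [NormedSpace ℂ Y]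
    (P : ℕ → Y →L[ℂ] Y) (A : Y →L[ℂ] Y) : Prop :=
  ∀ (x : ℕ → Y) (x₀ : Y), SConv P x x₀ → SConv P (fun j => A (x j)) (A x₀)

/-- `SN(Y)`. -/
def MemSN {Y : Type*} [NormedAddCommGroup Y] [NormedSpace ℂ Y]
    (P : ℕ → Y →L[ℂ] Y) (A : Y →L[ℂ] Y) : Prop :=
  ∀ (x : ℕ → Y) (x₀ : Y), SConv P x x₀ →
    Tendsto (fun j => ‖A (x j) - A x₀‖) atTop (𝓝 0)

/-- `M(Y)`: Montel operators. -/
def MemM {Y : Type*} [NormedAddCommGroup Y] [NormedSpace ℂ Y]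
    (P : ℕ → Y →L[ℂ] Y) (K : Y →L[ℂ] Y) : Prop :=
  ∀ x : ℕ → Y, (∃ C : ℝ, ∀ j, ‖x j‖ ≤ C) →
    ∃ (φ : ℕ → ℕ) (y : Y), StrictMono φ ∧ SConv P (fun i => K (x (φ i))) y

/-- `K(Y,P)`. -/
def MemKP {Y : Type*} [NormedAddCommGroup Y] [NormedSpace ℂ Y]
    (P : ℕ → Y →L[ℂ] Y) (K : Y →L[ℂ] Y) : Prop :=
  Tendsto (fun n => ‖K.comp (Qop P n)‖) atTop (𝓝 0) ∧
  Tendsto (fun n => ‖(Qop P n).comp K‖) atTop (𝓝 0)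

/-- `L(Y,P)`. -/
def MemLP {Y : Type*} [NormedAddCommGroup Y] [NormedSpace ℂ Y]
    (P : ℕ → Y →L[ℂ] Y) (A : Y →L[ℂ] Y) : Prop :=
  ∀ K : Y →L[ℂ] Y, MemKP P K → MemKP P (A.comp K) ∧ MemKP P (K.comp A)

/-- Fredholm: finite dimensional kernel, closed range of finite codimension. -/
def IsFredholmOp {E : Type*} [NormedAddCommGroup E] [NormedSpace ℂ E]
    (A : E →L[ℂ] E) : Prop :=
  FiniteDimensional ℂ (LinearMap.ker (A : E →ₗ[ℂ] E)) ∧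
  IsClosed (LinearMap.range (A : E →ₗ[ℂ] E) : Set E) ∧
  FiniteDimensional ℂ (E ⧸ LinearMap.range (A : E →ₗ[ℂ] E))

/-- The max-norm `|k| = max_i |k_i|` on `ℤ^N`, valued in `ℕ`. -/
def znorm {N : ℕ} (k : Fin N → ℤ) : ℕ := Finset.univ.sup fun i => (k i).natAbs

/-- `B` is the limit of the translates of `A` along the sequence `h`. -/
def LimOpAlong {Y : Type*} [NormedAddCommGroup Y] [NormedSpace ℂ Y] {N : ℕ}
    (P : ℕ → Y →L[ℂ] Y) (V : (Fin N → ℤ) → Y →L[ℂ] Y)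
    (A : Y →L[ℂ] Y) (h : ℕ → Fin N → ℤ) (B : Y →L[ℂ] Y) : Prop :=
  ∀ m : ℕ,
    Tendsto (fun n => ‖(P m).comp ((V (-h n)).comp (A.comp (V (h n))) - B)‖)
      atTop (𝓝 0) ∧
    Tendsto (fun n => ‖((V (-h n)).comp (A.comp (V (h n))) - B).comp (P m)‖)
      atTop (𝓝 0)

/-- `B` is a limit operator of `A`, i.e. `B ∈ σ_op(A)`. -/
def IsLimOp {Y : Type*} [NormedAddCommGroup Y] [NormedSpace ℂ Y] {N : ℕ}
    (P : ℕ → Y →L[ℂ] Y) (V : (Fin N → ℤ) → Y →L[ℂ] Y)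
    (A B : Y →L[ℂ] Y) : Prop :=
  ∃ h : ℕ → Fin N → ℤ,
    Tendsto (fun n => znorm (h n)) atTop atTop ∧ LimOpAlong P V A h B

/-- `A` is rich. -/
def IsRich {Y : Type*} [NormedAddCommGroup Y] [NormedSpace ℂ Y] {N : ℕ}
    (P : ℕ → Y →L[ℂ] Y) (V : (Fin N → ℤ) → Y →L[ℂ] Y) (A : Y →L[ℂ] Y) : Prop :=
  ∀ h : ℕ → Fin N → ℤ, Tendsto (fun n => znorm (h n)) atTop atTop →
    ∃ φ : ℕ → ℕ, StrictMono φ ∧ ∃ B : Y →L[ℂ] Y, LimOpAlong P V A (fun n => h (φ n)) B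


section Aux
variable {Y : Type*} [NormedAddCommGroup Y] [NormedSpace ℂ Y] {N : ℕ}

/-- Auxiliary seminorms. -/
noncomputable def pmS (P : ℕ → Y →L[ℂ] Y) (m : ℕ) (T : Y →L[ℂ] Y) : ℝ :=
  ‖(P m).comp T‖ + ‖T.comp (P m)‖

lemma pmS_nonneg (P : ℕ → Y →L[ℂ] Y) (m : ℕ) (T : Y →L[ℂ] Y) : 0 ≤ pmS P m T :=
  add_nonneg (norm_nonneg _) (norm_nonneg _)

lemma pmS_neg (P : ℕ → Y →L[ℂ] Y) (m : ℕ) (T : Y →L[ℂ] Y) : pmS P m (-T) = pmS P m T := by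
  simp [pmS]

lemma pmS_add_le (P : ℕ → Y →L[ℂ] Y) (m : ℕ) (S T : Y →L[ℂ] Y) :
    pmS P m (S + T) ≤ pmS P m S + pmS P m T := by
  have h1 : ‖(P m).comp (S + T)‖ ≤ ‖(P m).comp S‖ + ‖(P m).comp T‖ := by
    rw [ContinuousLinearMap.comp_add]; exact norm_add_le _ _
  have h2 : ‖(S + T).comp (P m)‖ ≤ ‖S.comp (P m)‖ + ‖T.comp (P m)‖ := by
    rw [ContinuousLinearMap.add_comp]; exact norm_add_le _ _
  simp only [pmS]; linarith

/-- The metric-defining sum. -/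
noncomputable def Dsum (P : ℕ → Y →L[ℂ] Y) (T : Y →L[ℂ] Y) : ℝ :=
  ∑' m, (1/2 : ℝ)^m * min 1 (pmS P m T)

lemma dterm_nonneg (P : ℕ → Y →L[ℂ] Y) (T : Y →L[ℂ] Y) (m : ℕ) :
    0 ≤ (1/2 : ℝ)^m * min 1 (pmS P m T) :=
  mul_nonneg (by positivity) (le_min zero_le_one (pmS_nonneg P m T))

lemma dterm_le (P : ℕ → Y →L[ℂ] Y) (T : Y →L[ℂ] Y) (m : ℕ) :
    (1/2 : ℝ)^m * min 1 (pmS P m T) ≤ (1/2 : ℝ)^m :=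
  mul_le_of_le_one_right (by positivity) (min_le_left _ _)

lemma dsum_summable (P : ℕ → Y →L[ℂ] Y) (T : Y →L[ℂ] Y) :
    Summable (fun m => (1/2 : ℝ)^m * min 1 (pmS P m T)) :=
  Summable.of_nonneg_of_le (dterm_nonneg P T) (dterm_le P T)
    (summable_geometric_of_lt_one (by norm_num) (by norm_num))

lemma dsum_nonneg (P : ℕ → Y →L[ℂ] Y) (T : Y →L[ℂ] Y) : 0 ≤ Dsum P T :=
  tsum_nonneg (dterm_nonneg P T)

lemma dterm_le_dsum (P : ℕ → Y →L[ℂ] Y) (T : Y →L[ℂ] Y) (m : ℕ) :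
    (1/2 : ℝ)^m * min 1 (pmS P m T) ≤ Dsum P T :=
  Summable.le_tsum (dsum_summable P T) m (fun j _ => dterm_nonneg P T j)

lemma dsum_zero (P : ℕ → Y →L[ℂ] Y) : Dsum P 0 = 0 := by
  simp [Dsum, pmS]

lemma dsum_neg (P : ℕ → Y →L[ℂ] Y) (T : Y →L[ℂ] Y) : Dsum P (-T) = Dsum P T := by
  simp [Dsum, pmS_neg]

lemma min1_subadd {a b : ℝ} (ha : 0 ≤ a) (hb : 0 ≤ b) :
    min 1 (a + b) ≤ min 1 a + min 1 b := by
  rcases le_total 1 a with h | h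
  · calc min 1 (a+b) ≤ 1 := min_le_left _ _
      _ ≤ min 1 a + min 1 b := by
          rw [min_eq_left h]; exact le_add_of_nonneg_right (le_min zero_le_one hb)
  · rcases le_total 1 b with h' | h'
    · calc min 1 (a+b) ≤ 1 := min_le_left _ _
        _ ≤ min 1 a + min 1 b := by
          rw [min_eq_left h']; exact le_add_of_nonneg_left (le_min zero_le_one ha)
    · rw [min_eq_right h, min_eq_right h']
      exact min_le_right _ _ |>.trans le_rfl

lemma dsum_triangle (P : ℕ → Y →L[ℂ] Y) (S T : Y →L[ℂ] Y) :
    Dsum P (S + T) ≤ Dsum P S + Dsum P T := by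
  have key : ∀ m, (1/2 : ℝ)^m * min 1 (pmS P m (S + T)) ≤
      (1/2 : ℝ)^m * min 1 (pmS P m S) + (1/2 : ℝ)^m * min 1 (pmS P m T) := by
    intro m
    rw [← mul_add]
    refine mul_le_mul_of_nonneg_left ?_ (by positivity)
    calc min 1 (pmS P m (S + T)) ≤ min 1 (pmS P m S + pmS P m T) :=
          min_le_min le_rfl (pmS_add_le P m S T)
      _ ≤ min 1 (pmS P m S) + min 1 (pmS P m T) :=
          min1_subadd (pmS_nonneg P m S) (pmS_nonneg P m T)
  calc Dsum P (S + T) ≤ ∑' m, ((1/2 : ℝ)^m * min 1 (pmS P m S) + (1/2 : ℝ)^m * min 1 (pmS P m T)) :=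
        Summable.tsum_le_tsum key (dsum_summable P _) ((dsum_summable P S).add (dsum_summable P T))
    _ = Dsum P S + Dsum P T := Summable.tsum_add (dsum_summable P S) (dsum_summable P T)

end Aux

section Aux2
variable {Y : Type*} [NormedAddCommGroup Y] [NormedSpace ℂ Y]

lemma two_pow_half_pow (m : ℕ) : (2:ℝ)^m * (1/2:ℝ)^m = 1 := by
  rw [one_div, inv_pow, mul_inv_cancel₀ (pow_ne_zero _ two_ne_zero)]

lemma dsum_tail_le (P : ℕ → Y →L[ℂ] Y) (T : Y →L[ℂ] Y) (M : ℕ) :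
    Dsum P T ≤ (∑ m ∈ Finset.range M, (1/2:ℝ)^m * min 1 (pmS P m T)) + 2 * (1/2:ℝ)^M := by
  have hs := dsum_summable P T
  rw [Dsum, ← Summable.sum_add_tsum_nat_add M hs]
  gcongr
  have hgeo : Summable (fun m : ℕ => (1/2:ℝ)^(m + M)) := by
    simp_rw [pow_add]
    exact (summable_geometric_of_lt_one (by norm_num) (by norm_num)).mul_right _
  calc ∑' m, (1/2:ℝ)^(m + M) * min 1 (pmS P (m + M) T)
      ≤ ∑' m : ℕ, (1/2:ℝ)^(m + M) := Summable.tsum_le_tsum (fun m => dterm_le P T (m + M))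
        ((summable_nat_add_iff M).2 hs) hgeo
    _ = 2 * (1/2:ℝ)^M := by
        simp_rw [pow_add]
        rw [tsum_mul_right, tsum_geometric_of_lt_one (by norm_num) (by norm_num)]
        norm_num [mul_comm]

lemma tendsto_dsum_zero_iff (P : ℕ → Y →L[ℂ] Y) (S : ℕ → Y →L[ℂ] Y) :
    Tendsto (fun j => Dsum P (S j)) atTop (𝓝 0) ↔
      ∀ m, Tendsto (fun j => pmS P m (S j)) atTop (𝓝 0) := by
  constructor
  · intro h m
    have h1 : Tendsto (fun j => min 1 (pmS P m (S j))) atTop (𝓝 0) := by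
      have hb : ∀ j, min 1 (pmS P m (S j)) ≤ (2:ℝ)^m * Dsum P (S j) := by
        intro j
        have h2 := dterm_le_dsum P (S j) m
        calc min 1 (pmS P m (S j)) = (2:ℝ)^m * ((1/2:ℝ)^m * min 1 (pmS P m (S j))) := by
              rw [← mul_assoc, two_pow_half_pow, one_mul]
          _ ≤ (2:ℝ)^m * Dsum P (S j) := by
              exact mul_le_mul_of_nonneg_left h2 (by positivity)
      have hg : Tendsto (fun j => (2:ℝ)^m * Dsum P (S j)) atTop (𝓝 0) := by
        simpa using h.const_mul ((2:ℝ)^m)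
      exact squeeze_zero (fun j => le_min zero_le_one (pmS_nonneg P m (S j))) hb hg
    have h3 : ∀ᶠ j in atTop, min 1 (pmS P m (S j)) = pmS P m (S j) := by
      filter_upwards [h1.eventually (gt_mem_nhds one_pos)] with j hj
      rcases le_total (pmS P m (S j)) 1 with h' | h'
      · exact min_eq_right h'
      · rw [min_eq_left h'] at hj; exact absurd hj (lt_irrefl 1)
    exact h1.congr' h3
  · intro h
    rw [Metric.tendsto_atTop]
    intro ε hε
    obtain ⟨M, hM⟩ : ∃ M : ℕ, 2 * (1/2:ℝ)^M < ε/2 := by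
      have h0 : Tendsto (fun M : ℕ => 2 * (1/2:ℝ)^M) atTop (𝓝 0) := by
        simpa using (tendsto_pow_atTop_nhds_zero_of_lt_one (by norm_num : (0:ℝ) ≤ 1/2)
          (by norm_num : (1/2:ℝ) < 1)).const_mul 2
      exact (h0.eventually (gt_mem_nhds (by linarith : (0:ℝ) < ε/2))).exists
    have hsum : Tendsto (fun j => ∑ m ∈ Finset.range M, (1/2:ℝ)^m * min 1 (pmS P m (S j)))
        atTop (𝓝 0) := by
      have hterm : ∀ m ∈ Finset.range M,
          Tendsto (fun j => (1/2:ℝ)^m * min 1 (pmS P m (S j))) atTop (𝓝 0) := by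
        intro m _
        have h0 : Tendsto (fun j => min 1 (pmS P m (S j))) atTop (𝓝 0) :=
          squeeze_zero (fun j => le_min zero_le_one (pmS_nonneg P m (S j)))
            (fun j => min_le_right _ _) (h m)
        simpa using h0.const_mul ((1/2:ℝ)^m)
      have := tendsto_finset_sum (Finset.range M) hterm
      simpa using this
    obtain ⟨n₀, hn₀⟩ := Filter.eventually_atTop.1
      (hsum.eventually (gt_mem_nhds (by linarith : (0:ℝ) < ε/2)))
    refine ⟨n₀, fun j hj => ?_⟩
    rw [Real.dist_eq, sub_zero, abs_of_nonneg (dsum_nonneg P (S j))]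
    calc Dsum P (S j) ≤ (∑ m ∈ Finset.range M, (1/2:ℝ)^m * min 1 (pmS P m (S j)))
          + 2 * (1/2:ℝ)^M := dsum_tail_le P (S j) M
      _ < ε/2 + ε/2 := add_lt_add (hn₀ j hj) hM
      _ = ε := by ring

end Aux2

section Aux3
variable {Y : Type*} [NormedAddCommGroup Y] [NormedSpace ℂ Y] {N : ℕ}

/-- Conjugation by translations. -/
def TrOp (V : (Fin N → ℤ) → Y →L[ℂ] Y) (k : Fin N → ℤ) (S : Y →L[ℂ] Y) : Y →L[ℂ] Y :=
  (V (-k)).comp (S.comp (V k))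

lemma tr_sub (V : (Fin N → ℤ) → Y →L[ℂ] Y) (k : Fin N → ℤ) (S T : Y →L[ℂ] Y) :
    TrOp V k (S - T) = TrOp V k S - TrOp V k T := by
  ext x; simp [TrOp]

lemma tr_comp {V : (Fin N → ℤ) → Y →L[ℂ] Y}
    (hVadd : ∀ k m : Fin N → ℤ, (V k).comp (V m) = V (k + m))
    (k j : Fin N → ℤ) (S : Y →L[ℂ] Y) :
    TrOp V k (TrOp V j S) = TrOp V (j + k) S := by
  ext x
  have h1 : V j (V k x) = V (j + k) x := by
    rw [← ContinuousLinearMap.comp_apply, hVadd]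
  have h2 : ∀ y, V (-k) (V (-j) y) = V (-(j + k)) y := by
    intro y
    rw [← ContinuousLinearMap.comp_apply, hVadd, neg_add_rev]
  simp only [TrOp, ContinuousLinearMap.comp_apply, h1, h2]

lemma normP_le {P : ℕ → Y →L[ℂ] Y} (hP : ApproxId P) (m : ℕ) (x : Y) : ‖P m x‖ ≤ ‖x‖ :=
  (hP.1 x).1 ⟨m, rfl⟩

lemma pmS_tr_le {P : ℕ → Y →L[ℂ] Y} {V : (Fin N → ℤ) → Y →L[ℂ] Y}
    (hP : ApproxId P) (hViso : ∀ (k : Fin N → ℤ) (x : Y), ‖V k x‖ = ‖x‖)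
    (hcompat2 : ∀ (m : ℕ) (k : Fin N → ℤ), ∃ n₀ : ℕ, ∀ n : ℕ, n₀ < n →
      (P m).comp ((V k).comp (Qop P n)) = 0 ∧ (Qop P n).comp ((V k).comp (P m)) = 0)
    (m : ℕ) (k : Fin N → ℤ) : ∃ n : ℕ, ∀ S : Y →L[ℂ] Y,
      pmS P m (TrOp V k S) ≤ pmS P n S := by
  obtain ⟨n₀, h₀⟩ := hcompat2 m (-k)
  obtain ⟨n₁, h₁⟩ := hcompat2 m k
  refine ⟨max n₀ n₁ + 1, fun S => ?_⟩
  set n := max n₀ n₁ + 1 with hn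
  have hn₀ : n₀ < n := by omega
  have hn₁ : n₁ < n := by omega
  have e1 := (h₀ n hn₀).1
  have e2 := (h₁ n hn₁).2
  have p1 : ∀ z : Y, P m (V (-k) z) = P m (V (-k) (P n z)) := by
    intro z
    have := ContinuousLinearMap.ext_iff.1 e1 z
    simp only [ContinuousLinearMap.comp_apply, Qop, ContinuousLinearMap.sub_apply,
      ContinuousLinearMap.id_apply, ContinuousLinearMap.zero_apply, map_sub] at this
    exact sub_eq_zero.1 this
  have p2 : ∀ z : Y, V k (P m z) = P n (V k (P m z)) := by
    intro z
    have := ContinuousLinearMap.ext_iff.1 e2 z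
    simp only [ContinuousLinearMap.comp_apply, Qop, ContinuousLinearMap.sub_apply,
      ContinuousLinearMap.id_apply, ContinuousLinearMap.zero_apply, map_sub] at this
    exact sub_eq_zero.1 this
  have hleft : ‖(P m).comp (TrOp V k S)‖ ≤ ‖(P n).comp S‖ := by
    refine ContinuousLinearMap.opNorm_le_bound _ (norm_nonneg _) (fun x => ?_)
    have e : ((P m).comp (TrOp V k S)) x = P m (V (-k) (P n (S (V k x)))) := by
      simp only [TrOp, ContinuousLinearMap.comp_apply]
      exact p1 (S (V k x))
    rw [e]
    calc ‖P m (V (-k) (P n (S (V k x))))‖ ≤ ‖V (-k) (P n (S (V k x)))‖ := normP_le hP m _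
      _ = ‖P n (S (V k x))‖ := hViso _ _
      _ = ‖((P n).comp S) (V k x)‖ := rfl
      _ ≤ ‖(P n).comp S‖ * ‖V k x‖ := ContinuousLinearMap.le_opNorm _ _
      _ = ‖(P n).comp S‖ * ‖x‖ := by rw [hViso]
  have hright : ‖(TrOp V k S).comp (P m)‖ ≤ ‖S.comp (P n)‖ := by
    refine ContinuousLinearMap.opNorm_le_bound _ (norm_nonneg _) (fun x => ?_)
    have e : ((TrOp V k S).comp (P m)) x = V (-k) (S (P n (V k (P m x)))) := by
      simp only [TrOp, ContinuousLinearMap.comp_apply]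
      rw [← p2]
    rw [e]
    calc ‖V (-k) (S (P n (V k (P m x))))‖ = ‖S (P n (V k (P m x)))‖ := hViso _ _
      _ = ‖(S.comp (P n)) (V k (P m x))‖ := rfl
      _ ≤ ‖S.comp (P n)‖ * ‖V k (P m x)‖ := ContinuousLinearMap.le_opNorm _ _
      _ = ‖S.comp (P n)‖ * ‖P m x‖ := by rw [hViso]
      _ ≤ ‖S.comp (P n)‖ * ‖x‖ :=
          mul_le_mul_of_nonneg_left (normP_le hP m x) (norm_nonneg _)
  exact add_le_add hleft hright

lemma limopalong_iff {P : ℕ → Y →L[ℂ] Y} {V : (Fin N → ℤ) → Y →L[ℂ] Y}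
    (A : Y →L[ℂ] Y) (h : ℕ → Fin N → ℤ) (B : Y →L[ℂ] Y) :
    LimOpAlong P V A h B ↔
      ∀ m, Tendsto (fun n => pmS P m (TrOp V (h n) A - B)) atTop (𝓝 0) := by
  constructor
  · intro hL m
    have := ((hL m).1).add ((hL m).2)
    simpa only [add_zero, pmS, TrOp] using this
  · intro hL m
    constructor
    · exact squeeze_zero (fun n => norm_nonneg _)
        (fun n => le_add_of_nonneg_right (norm_nonneg _)) (hL m)
    · exact squeeze_zero (fun n => norm_nonneg _)
        (fun n => le_add_of_nonneg_left (norm_nonneg _)) (hL m)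

lemma znorm_neg {N : ℕ} (k : Fin N → ℤ) : znorm (-k) = znorm k := by
  simp [znorm]

lemma znorm_add_le {N : ℕ} (a b : Fin N → ℤ) : znorm (a + b) ≤ znorm a + znorm b :=
  Finset.sup_le fun i _ => le_trans (Int.natAbs_add_le _ _)
    (add_le_add (Finset.le_sup (f := fun i => (a i).natAbs) (Finset.mem_univ i))
      (Finset.le_sup (f := fun i => (b i).natAbs) (Finset.mem_univ i)))

lemma znorm_lower {N : ℕ} (a b : Fin N → ℤ) : znorm a ≤ znorm (a + b) + znorm b := by
  have := znorm_add_le (a + b) (-b)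
  simpa [znorm_neg] using this

lemma ex_choice {F : ℕ → ℕ → ℝ} (hF : ∀ m, Tendsto (fun j => F m j) atTop (𝓝 0))
    {u : ℕ → ℕ} (hu : Tendsto u atTop atTop) (n r : ℕ) {ε : ℝ} (hε : 0 < ε) :
    ∃ j, (∀ m, m ≤ n → F m j < ε) ∧ r ≤ u j := by
  have h1 : ∀ᶠ j in atTop, ∀ m ∈ Finset.range (n+1), F m j < ε :=
    (Filter.eventually_all_finset _).2 fun m _ => (hF m).eventually (gt_mem_nhds hε)
  exact ((h1.and (hu.eventually_ge_atTop r)).exists).imp fun j hj =>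
    ⟨fun m hm => hj.1 m (Finset.mem_range_succ_iff.2 hm), hj.2⟩

end Aux3

section Aux4
variable {Y : Type*} [NormedAddCommGroup Y] [NormedSpace ℂ Y] {N : ℕ}
variable {P : ℕ → Y →L[ℂ] Y} {V : (Fin N → ℤ) → Y →L[ℂ] Y}

lemma one_div_succ_pos (n : ℕ) : (0:ℝ) < 1 / (n + 1) := by positivity

lemma tendsto_one_div_succ : Tendsto (fun n : ℕ => (1:ℝ) / (n + 1)) atTop (𝓝 0) :=
  tendsto_one_div_add_atTop_nhds_zero_nat

lemma limop_trans (hP : ApproxId P) (hViso : ∀ (k : Fin N → ℤ) (x : Y), ‖V k x‖ = ‖x‖)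
    (hVadd : ∀ k m : Fin N → ℤ, (V k).comp (V m) = V (k + m))
    (hcompat2 : ∀ (m : ℕ) (k : Fin N → ℤ), ∃ n₀ : ℕ, ∀ n : ℕ, n₀ < n →
      (P m).comp ((V k).comp (Qop P n)) = 0 ∧ (Qop P n).comp ((V k).comp (P m)) = 0)
    {A B C : Y →L[ℂ] Y} (hAB : IsLimOp P V A B) (hBC : IsLimOp P V B C) :
    IsLimOp P V A C := by
  obtain ⟨h, hz, hAB⟩ := hAB
  obtain ⟨g, gz, hBC⟩ := hBC
  rw [limopalong_iff] at hAB hBC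
  have hsel : ∀ n : ℕ, ∃ j,
      (∀ m, m ≤ n → pmS P m (TrOp V (g n) (TrOp V (h j) A - B)) < 1 / (n + 1)) ∧
      znorm (g n) + n ≤ znorm (h j) := by
    intro n
    refine ex_choice (fun m => ?_) hz n (znorm (g n) + n) (one_div_succ_pos n)
    obtain ⟨n', hn'⟩ := pmS_tr_le hP hViso hcompat2 m (g n)
    exact squeeze_zero (fun j => pmS_nonneg P m _) (fun j => hn' _) (hAB n')
  choose j hj1 hj2 using hsel
  refine ⟨fun n => h (j n) + g n, ?_, ?_⟩
  · refine tendsto_atTop_mono (fun n => ?_) tendsto_id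
    show n ≤ znorm (h (j n) + g n)
    have l1 := znorm_lower (h (j n)) (g n)
    have l2 := hj2 n
    omega
  · rw [limopalong_iff]
    intro m
    refine squeeze_zero' (g := fun n => 1 / (n + 1) + pmS P m (TrOp V (g n) B - C))
      (Filter.Eventually.of_forall fun n => pmS_nonneg P m _) ?_ ?_
    · filter_upwards [eventually_ge_atTop m] with n hn
      have e : TrOp V (h (j n) + g n) A - C =
          TrOp V (g n) (TrOp V (h (j n)) A - B) + (TrOp V (g n) B - C) := by
        rw [tr_sub, tr_comp hVadd]; abel
      calc pmS P m (TrOp V (h (j n) + g n) A - C)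
          ≤ pmS P m (TrOp V (g n) (TrOp V (h (j n)) A - B)) + pmS P m (TrOp V (g n) B - C) := by
            rw [e]; exact pmS_add_le P m _ _
        _ ≤ 1 / (n + 1) + pmS P m (TrOp V (g n) B - C) :=
            add_le_add_left (hj1 n m hn).le _
    · have := tendsto_one_div_succ.add (hBC m)
      simpa using this

lemma limop_rich (hP : ApproxId P) (hViso : ∀ (k : Fin N → ℤ) (x : Y), ‖V k x‖ = ‖x‖)
    (hVadd : ∀ k m : Fin N → ℤ, (V k).comp (V m) = V (k + m))
    (hcompat2 : ∀ (m : ℕ) (k : Fin N → ℤ), ∃ n₀ : ℕ, ∀ n : ℕ, n₀ < n →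
      (P m).comp ((V k).comp (Qop P n)) = 0 ∧ (Qop P n).comp ((V k).comp (P m)) = 0)
    {A B : Y →L[ℂ] Y} (hA : IsRich P V A) (hB : IsLimOp P V A B) :
    IsRich P V B := by
  intro h hz
  obtain ⟨g, gz, hAB⟩ := hB
  rw [limopalong_iff] at hAB
  have hsel : ∀ n : ℕ, ∃ j,
      (∀ m, m ≤ n → pmS P m (TrOp V (h n) (TrOp V (g j) A - B)) < 1 / (n + 1)) ∧
      znorm (h n) + n ≤ znorm (g j) := by
    intro n
    refine ex_choice (fun m => ?_) gz n (znorm (h n) + n) (one_div_succ_pos n)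
    obtain ⟨n', hn'⟩ := pmS_tr_le hP hViso hcompat2 m (h n)
    exact squeeze_zero (fun j => pmS_nonneg P m _) (fun j => hn' _) (hAB n')
  choose j hj1 hj2 using hsel
  set f : ℕ → Fin N → ℤ := fun n => g (j n) + h n with hf
  have hfz : Tendsto (fun n => znorm (f n)) atTop atTop := by
    refine tendsto_atTop_mono (fun n => ?_) tendsto_id
    show n ≤ znorm (g (j n) + h n)
    have l1 := znorm_lower (g (j n)) (h n)
    have l2 := hj2 n
    omega
  obtain ⟨φ, hφ, C, hC⟩ := hA f hfz
  refine ⟨φ, hφ, C, ?_⟩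
  rw [limopalong_iff] at hC ⊢
  intro m
  refine squeeze_zero' (g := fun i => 1 / (φ i + 1) + pmS P m (TrOp V (f (φ i)) A - C))
    (Filter.Eventually.of_forall fun i => pmS_nonneg P m _) ?_ ?_
  · filter_upwards [eventually_ge_atTop m] with i hi
    have hmφ : m ≤ φ i := le_trans hi (hφ.le_apply)
    have e : TrOp V (h (φ i)) B - C =
        -(TrOp V (h (φ i)) (TrOp V (g (j (φ i))) A - B)) + (TrOp V (f (φ i)) A - C) := by
      rw [tr_sub, tr_comp hVadd, hf]; abel
    calc pmS P m (TrOp V (h (φ i)) B - C)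
        ≤ pmS P m (-(TrOp V (h (φ i)) (TrOp V (g (j (φ i))) A - B)))
          + pmS P m (TrOp V (f (φ i)) A - C) := by
          rw [e]; exact pmS_add_le P m _ _
      _ ≤ 1 / (φ i + 1) + pmS P m (TrOp V (f (φ i)) A - C) := by
          rw [pmS_neg]
          exact add_le_add_left (hj1 (φ i) m hmφ).le _
  · have h1 : Tendsto (fun i => (1:ℝ) / (φ i + 1)) atTop (𝓝 0) :=
      tendsto_one_div_succ.comp hφ.tendsto_atTop
    have := h1.add (hC m)
    simpa using this

lemma rich_nonempty (hN : 0 < N) {A : Y →L[ℂ] Y} (hA : IsRich P V A) :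
    ∃ B : Y →L[ℂ] Y, IsLimOp P V A B := by
  have : Nonempty (Fin N) := Fin.pos_iff_nonempty.1 hN
  set h : ℕ → Fin N → ℤ := fun n _ => (n : ℤ) with hh
  have hzn : ∀ n, znorm (h n) = n := by
    intro n
    simp [znorm, hh, Finset.sup_const (Finset.univ_nonempty)]
  have hz : Tendsto (fun n => znorm (h n)) atTop atTop := by
    simp only [hzn]; exact tendsto_id
  obtain ⟨φ, hφ, B, hB⟩ := hA h hz
  refine ⟨B, fun n => h (φ n), ?_, hB⟩
  simp only [hzn]
  exact hφ.tendsto_atTop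

end Aux4

/-- Elements of the operator spectrum of `A`, as a type. -/
structure Wrap {Y : Type*} [NormedAddCommGroup Y] [NormedSpace ℂ Y] {N : ℕ}
    (P : ℕ → Y →L[ℂ] Y) (V : (Fin N → ℤ) → Y →L[ℂ] Y) (A : Y →L[ℂ] Y) where
  val : Y →L[ℂ] Y
  mem : IsLimOp P V A val

section Aux5
variable {Y : Type*} [NormedAddCommGroup Y] [NormedSpace ℂ Y] {N : ℕ}
variable {P : ℕ → Y →L[ℂ] Y} {V : (Fin N → ℤ) → Y →L[ℂ] Y} {A : Y →L[ℂ] Y}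

noncomputable instance : PseudoMetricSpace (Wrap P V A) where
  dist x y := Dsum P (x.val - y.val)
  dist_self x := by simp [dsum_zero]
  dist_comm x y := by
    have : y.val - x.val = -(x.val - y.val) := by abel
    show Dsum P (x.val - y.val) = Dsum P (y.val - x.val)
    rw [this, dsum_neg]
  dist_triangle x y z := by
    show Dsum P (x.val - z.val) ≤ Dsum P (x.val - y.val) + Dsum P (y.val - z.val)
    have e : x.val - z.val = (x.val - y.val) + (y.val - z.val) := by abel
    rw [e]; exact dsum_triangle P _ _

lemma tendsto_wrap_iff (x : ℕ → Wrap P V A) (a : Wrap P V A) :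
    Tendsto x atTop (𝓝 a) ↔
      ∀ m, Tendsto (fun j => pmS P m ((x j).val - a.val)) atTop (𝓝 0) := by
  rw [tendsto_iff_dist_tendsto_zero]
  exact tendsto_dsum_zero_iff P (fun j => (x j).val - a.val)

lemma ss_closed (B : Y →L[ℂ] Y) :
    IsClosed {x : Wrap P V A | IsLimOp P V B x.val} := by
  refine IsSeqClosed.isClosed ?_
  intro x a hx hxa
  rw [tendsto_wrap_iff] at hxa
  have hsel : ∀ n : ℕ, ∃ k : Fin N → ℤ,
      (∀ m, m ≤ n → pmS P m (TrOp V k B - a.val) < 2 / (n + 1)) ∧ n ≤ znorm k := by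
    intro n
    obtain ⟨j, hj, -⟩ := ex_choice hxa tendsto_id n 0 (one_div_succ_pos n)
    obtain ⟨g, gz, hg⟩ := hx j
    rw [limopalong_iff] at hg
    obtain ⟨i, hi1, hi2⟩ := ex_choice hg gz n n (one_div_succ_pos n)
    refine ⟨g i, fun m hm => ?_, hi2⟩
    have e : TrOp V (g i) B - a.val = (TrOp V (g i) B - (x j).val) + ((x j).val - a.val) := by
      abel
    calc pmS P m (TrOp V (g i) B - a.val)
        ≤ pmS P m (TrOp V (g i) B - (x j).val) + pmS P m ((x j).val - a.val) := by
          rw [e]; exact pmS_add_le P m _ _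
      _ < 1 / (n + 1) + 1 / (n + 1) := add_lt_add (hi1 m hm) (hj m hm)
      _ = 2 / (n + 1) := by ring
  choose k hk1 hk2 using hsel
  refine ⟨k, tendsto_atTop_mono hk2 tendsto_id, (limopalong_iff B k a.val).2 fun m => ?_⟩
  refine squeeze_zero' (g := fun n : ℕ => 2 / ((n:ℝ) + 1))
    (Filter.Eventually.of_forall fun n => pmS_nonneg P m _) ?_ ?_
  · filter_upwards [eventually_ge_atTop m] with n hn
    exact (hk1 n m hn).le
  · have := tendsto_one_div_succ.const_mul 2
    simpa [div_eq_mul_inv, mul_comm, one_div] using this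

lemma wrap_seqcompact (hA : IsRich P V A) :
    IsSeqCompact (Set.univ : Set (Wrap P V A)) := by
  intro x _
  have hsel : ∀ j : ℕ, ∃ κ : Fin N → ℤ,
      (∀ m, m ≤ j → pmS P m (TrOp V κ A - (x j).val) < 1 / (j + 1)) ∧ j ≤ znorm κ := by
    intro j
    obtain ⟨g, gz, hg⟩ := (x j).mem
    rw [limopalong_iff] at hg
    obtain ⟨i, h1, h2⟩ := ex_choice hg gz j j (one_div_succ_pos j)
    exact ⟨g i, h1, h2⟩
  choose κ h1 h2 using hsel
  have hkz : Tendsto (fun j => znorm (κ j)) atTop atTop := tendsto_atTop_mono h2 tendsto_id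
  obtain ⟨φ, hφ, B, hB⟩ := hA κ hkz
  have hBlim : IsLimOp P V A B := by
    refine ⟨fun n => κ (φ n), ?_, hB⟩
    exact tendsto_atTop_mono (fun n => le_trans hφ.le_apply (h2 (φ n))) tendsto_id
  refine ⟨⟨B, hBlim⟩, Set.mem_univ _, φ, hφ, ?_⟩
  rw [limopalong_iff] at hB
  have : Tendsto (fun i => x (φ i)) atTop (𝓝 (⟨B, hBlim⟩ : Wrap P V A)) := by
    rw [tendsto_wrap_iff]
    intro m
    refine squeeze_zero' (g := fun i => 1 / (φ i + 1) + pmS P m (TrOp V (κ (φ i)) A - B))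
      (Filter.Eventually.of_forall fun i => pmS_nonneg P m _) ?_ ?_
    · filter_upwards [eventually_ge_atTop m] with i hi
      have hmφ : m ≤ φ i := le_trans hi hφ.le_apply
      have e : (x (φ i)).val - B =
          -(TrOp V (κ (φ i)) A - (x (φ i)).val) + (TrOp V (κ (φ i)) A - B) := by abel
      calc pmS P m ((x (φ i)).val - B)
          ≤ pmS P m (-(TrOp V (κ (φ i)) A - (x (φ i)).val))
            + pmS P m (TrOp V (κ (φ i)) A - B) := by
            rw [e]; exact pmS_add_le P m _ _
        _ ≤ 1 / (φ i + 1) + pmS P m (TrOp V (κ (φ i)) A - B) := by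
            rw [pmS_neg]
            exact add_le_add_left (h1 (φ i) m hmφ).le _
    · have hone : Tendsto (fun i => (1:ℝ) / (φ i + 1)) atTop (𝓝 0) :=
        tendsto_one_div_succ.comp hφ.tendsto_atTop
      simpa using hone.add (hB m)
  exact this

end Aux5

/-- The operator spectrum of `B`, inside the wrapped spectrum of `A`. -/
def SSpec {Y : Type*} [NormedAddCommGroup Y] [NormedSpace ℂ Y] {N : ℕ}
    (P : ℕ → Y →L[ℂ] Y) (V : (Fin N → ℤ) → Y →L[ℂ] Y) (A B : Y →L[ℂ] Y) :
    Set (Wrap P V A) := {x | IsLimOp P V B x.val}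

theorem statement19' {Y : Type*} [NormedAddCommGroup Y] [NormedSpace ℂ Y]
    {N : ℕ} (hN : 0 < N)
    (P : ℕ → Y →L[ℂ] Y) (hP : ApproxId P)
    (V : (Fin N → ℤ) → Y →L[ℂ] Y)
    (hViso : ∀ (k : Fin N → ℤ) (x : Y), ‖V k x‖ = ‖x‖)
    (hVadd : ∀ k m : Fin N → ℤ, (V k).comp (V m) = V (k + m))
    (hcompat2 : ∀ (m : ℕ) (k : Fin N → ℤ), ∃ n₀ : ℕ, ∀ n : ℕ, n₀ < n →
      (P m).comp ((V k).comp (Qop P n)) = 0 ∧ (Qop P n).comp ((V k).comp (P m)) = 0)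
    (A : Y →L[ℂ] Y) (hA : IsRich P V A) :
    ∃ B : Y →L[ℂ] Y, IsLimOp P V A B ∧ IsLimOp P V B B ∧
      ∀ C : Y →L[ℂ] Y, IsLimOp P V B C →
        ∀ D : Y →L[ℂ] Y, (IsLimOp P V C D ↔ IsLimOp P V B D) := by
  classical
  have htrans : ∀ {B C D : Y →L[ℂ] Y}, IsLimOp P V B C → IsLimOp P V C D →
      IsLimOp P V B D := fun hBC hCD => limop_trans hP hViso hVadd hcompat2 hBC hCD
  have hrich : ∀ {B : Y →L[ℂ] Y}, IsLimOp P V A B → IsRich P V B :=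
    fun hB => limop_rich hP hViso hVadd hcompat2 hA hB
  have hSSne : ∀ B : Y →L[ℂ] Y, IsLimOp P V A B → (SSpec P V A B).Nonempty := by
    intro B hB
    obtain ⟨C, hC⟩ := rich_nonempty hN (hrich hB)
    exact ⟨⟨C, htrans hB hC⟩, hC⟩
  have hcpt : IsCompact (Set.univ : Set (Wrap P V A)) := (wrap_seqcompact hA).isCompact
  set S : Set (Set (Wrap P V A)) :=
    {s | ∃ B : Y →L[ℂ] Y, IsLimOp P V A B ∧ s = SSpec P V A B} with hS
  obtain ⟨B₁, hB₁⟩ := rich_nonempty hN hA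
  have hx₀ : SSpec P V A B₁ ∈ S := ⟨B₁, hB₁, rfl⟩
  have Hchain : ∀ c ⊆ S, IsChain (· ⊆ ·) c → c.Nonempty →
      ∃ lb ∈ S, ∀ s ∈ c, lb ⊆ s := by
    intro c hcS hchain hcne
    haveI : Nonempty c := hcne.to_subtype
    have hnei : ∀ i : c, (i : Set (Wrap P V A)).Nonempty := by
      intro i; obtain ⟨B, hB, hs⟩ := hcS i.2; rw [hs]; exact hSSne B hB
    have hcl : ∀ i : c, IsClosed (i : Set (Wrap P V A)) := by
      intro i; obtain ⟨B, hB, hs⟩ := hcS i.2; rw [hs]; exact ss_closed B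
    have hcp : ∀ i : c, IsCompact (i : Set (Wrap P V A)) :=
      fun i => hcpt.of_isClosed_subset (hcl i) (Set.subset_univ _)
    have hdir : Directed (· ⊇ ·) (fun i : c => (i : Set (Wrap P V A))) := by
      intro i j
      rcases eq_or_ne (i : Set (Wrap P V A)) (j : Set (Wrap P V A)) with h | h
      · exact ⟨i, subset_refl _, h.subset⟩
      · rcases hchain i.2 j.2 h with h' | h'
        · exact ⟨i, subset_refl _, h'⟩
        · exact ⟨j, h', subset_refl _⟩
    obtain ⟨x, hx⟩ := IsCompact.nonempty_iInter_of_directed_nonempty_isCompact_isClosed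
      (fun i : c => (i : Set (Wrap P V A))) hdir hnei hcp hcl
    refine ⟨SSpec P V A x.val, ⟨x.val, x.mem, rfl⟩, ?_⟩
    intro s hs
    obtain ⟨B, hB, rfl⟩ := hcS hs
    have hxB : IsLimOp P V B x.val := Set.mem_iInter.1 hx ⟨_, hs⟩
    exact fun y hy => htrans hxB hy
  obtain ⟨M, -, hMin⟩ := zorn_superset_nonempty S Hchain (SSpec P V A B₁) hx₀
  obtain ⟨B₀, hB₀A, rfl⟩ := hMin.prop
  have hmin : ∀ B : Y →L[ℂ] Y, IsLimOp P V A B → SSpec P V A B ⊆ SSpec P V A B₀ →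
      SSpec P V A B = SSpec P V A B₀ :=
    fun B hB hsub => Set.Subset.antisymm hsub (hMin.2 ⟨B, hB, rfl⟩ hsub)
  obtain ⟨b, hb⟩ := hSSne B₀ hB₀A
  have hbA : IsLimOp P V A b.val := b.mem
  have hsub : SSpec P V A b.val ⊆ SSpec P V A B₀ := fun y hy => htrans hb hy
  have heq : SSpec P V A b.val = SSpec P V A B₀ := hmin b.val hbA hsub
  have hself : IsLimOp P V b.val b.val := by
    have hmem : b ∈ SSpec P V A b.val := by rw [heq]; exact hb
    exact hmem
  refine ⟨b.val, hbA, hself, ?_⟩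
  intro C hC D
  have hCA : IsLimOp P V A C := htrans hbA hC
  have hCb : (⟨C, hCA⟩ : Wrap P V A) ∈ SSpec P V A b.val := hC
  have hCB₀ : IsLimOp P V B₀ C := by
    have := heq ▸ hCb
    exact this
  have hsubC : SSpec P V A C ⊆ SSpec P V A B₀ := fun y hy => htrans hCB₀ hy
  have heqC : SSpec P V A C = SSpec P V A B₀ := hmin C hCA hsubC
  have heqCb : SSpec P V A C = SSpec P V A b.val := heqC.trans heq.symm
  constructor
  · intro hD
    have hDA : IsLimOp P V A D := htrans hCA hD
    have hmem : (⟨D, hDA⟩ : Wrap P V A) ∈ SSpec P V A C := hD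
    rw [heqCb] at hmem
    exact hmem
  · intro hD
    have hDA : IsLimOp P V A D := htrans hbA hD
    have hmem : (⟨D, hDA⟩ : Wrap P V A) ∈ SSpec P V A b.val := hD
    rw [← heqCb] at hmem
    exact hmem

/-- Every rich operator has a self-similar, recurrent limit operator. -/
theorem statement19 {Y : Type*} [NormedAddCommGroup Y] [NormedSpace ℂ Y] [CompleteSpace Y]
    {N : ℕ} (hN : 0 < N)
    (P : ℕ → Y →L[ℂ] Y) (hP : ApproxId P)
    (V : (Fin N → ℤ) → Y →L[ℂ] Y)
    (hViso : ∀ (k : Fin N → ℤ) (x : Y), ‖V k x‖ = ‖x‖)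
    (hV0 : V 0 = ContinuousLinearMap.id ℂ Y)
    (hVadd : ∀ k m : Fin N → ℤ, (V k).comp (V m) = V (k + m))
    (hcompat1 : ∀ m n : ℕ, ∃ k₀ : ℕ, ∀ k : Fin N → ℤ, k₀ < znorm k →
      (P m).comp ((V k).comp (P n)) = 0)
    (hcompat2 : ∀ (m : ℕ) (k : Fin N → ℤ), ∃ n₀ : ℕ, ∀ n : ℕ, n₀ < n →
      (P m).comp ((V k).comp (Qop P n)) = 0 ∧ (Qop P n).comp ((V k).comp (P m)) = 0)
    (A : Y →L[ℂ] Y) (hA : IsRich P V A) :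
    ∃ B : Y →L[ℂ] Y, IsLimOp P V A B ∧ IsLimOp P V B B ∧
      ∀ C : Y →L[ℂ] Y, IsLimOp P V B C →
        ∀ D : Y →L[ℂ] Y, (IsLimOp P V C D ↔ IsLimOp P V B D) := by
  exact statement19' hN P hP V hViso hVadd hcompat2 A hA
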